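/- Let p, q be patterns with lbs(p) ∩ lbs(q) = ∅. Then for every pattern r: p ⊕ q ∼ r if and only if p ∼ q ⋈ r, where p ⊕ q is the pattern (p \ {Z_p}) ∪ (q \ {Z_q}) ∪ {Z_p ∪ Z_q} and Z_p, Z_q are the zero-sets of p and q. -/

import Mathlib

open Finset
open scoped Classical

namespace PatternST

variable {α : Type*} [DecidableEq α]

/-- `p` is a pattern over ground set `U` with zero element `z`:
a family of subsets of `U ∪ {z}` with exactly one member containing `z`. -/
def IsPattern (z : α) (U : Finset α) (p : Finset (Finset α)) : Prop :=
  (∀ S ∈ p, S ⊆ insert z U) ∧ ∃! S, S ∈ p ∧ z ∈ S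

/-- Two sets are linked if one belongs to `p`, the other to `q`, and they intersect. -/
def linkRel (p q : Finset (Finset α)) (S T : Finset α) : Prop :=
  ((S ∈ p ∧ T ∈ q) ∨ (S ∈ q ∧ T ∈ p)) ∧ (S ∩ T).Nonempty

/-- Reflexive-transitive (and, by symmetry of `linkRel`, symmetric) closure. -/
def conn (p q : Finset (Finset α)) : Finset α → Finset α → Prop :=
  Relation.ReflTransGen (linkRel p q)

/-- The join `p ⋈ q`: unions of the equivalence classes of `conn` on `p ∪ q`. -/
noncomputable def pjoin (p q : Finset (Finset α)) : Finset (Finset α) :=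
  (p ∪ q).image fun S => ((p ∪ q).filter fun T => conn p q S T).sup id

/-- `p` and `q` are consistent if `p ⋈ q` consists of a single set. -/
def consistent (p q : Finset (Finset α)) : Prop := (pjoin p q).card = 1

/-- The labels (elements of `U`, i.e. everything except `z`) occurring in `p`. -/
def lbs (z : α) (p : Finset (Finset α)) : Finset α := (p.sup id).erase z

/-- The labels appearing as singletons in `p`. -/
def sing (z : α) (p : Finset (Finset α)) : Finset α :=
  (lbs z p).filter fun u => ({u} : Finset α) ∈ p

/-- A pattern is complete if every occurring label occurs as a singleton. -/
def Complete (z : α) (p : Finset (Finset α)) : Prop := lbs z p = sing z p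

/-! ### Auxiliary machinery -/

lemma linkRel_symm {p q : Finset (Finset α)} {S T : Finset α}
    (h : linkRel p q S T) : linkRel p q T S := by
  obtain ⟨h1, h2⟩ := h
  refine ⟨?_, by rwa [Finset.inter_comm]⟩
  rcases h1 with ⟨a, b⟩ | ⟨a, b⟩
  · exact Or.inr ⟨b, a⟩
  · exact Or.inl ⟨b, a⟩

lemma conn_symm {p q : Finset (Finset α)} {S T : Finset α}
    (h : conn p q S T) : conn p q T S :=
  (@Relation.ReflTransGen.stdSymm _ _ ⟨fun _ _ h' => linkRel_symm h'⟩).symm _ _ h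

lemma conn_mem {p q : Finset (Finset α)} {S T : Finset α}
    (hS : S ∈ p ∪ q) (h : conn p q S T) : T ∈ p ∪ q := by
  induction h with
  | refl => exact hS
  | tail _ hstep _ =>
    rcases hstep.1 with ⟨_, hb⟩ | ⟨_, hb⟩
    · exact Finset.mem_union_right _ hb
    · exact Finset.mem_union_left _ hb

/-- The union of the `conn`-class of `S`. -/
noncomputable def clsOf (p q : Finset (Finset α)) (S : Finset α) : Finset α :=
  ((p ∪ q).filter fun T => conn p q S T).sup id

lemma mem_clsOf {p q : Finset (Finset α)} {S : Finset α} {x : α} :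
    x ∈ clsOf p q S ↔ ∃ T, T ∈ p ∪ q ∧ conn p q S T ∧ x ∈ T := by
  simp [clsOf, Finset.mem_sup, Finset.mem_filter, and_assoc]

lemma subset_clsOf {p q : Finset (Finset α)} {S : Finset α} (hS : S ∈ p ∪ q) :
    S ⊆ clsOf p q S := fun _ hx => mem_clsOf.mpr ⟨S, hS, Relation.ReflTransGen.refl, hx⟩

lemma clsOf_eq_of_conn {p q : Finset (Finset α)} {S T : Finset α}
    (h : conn p q S T) : clsOf p q S = clsOf p q T := by
  unfold clsOf
  congr 1
  apply Finset.filter_congr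
  intro X _
  exact ⟨fun h' => (conn_symm h).trans h', fun h' => h.trans h'⟩

lemma conn_empty {p q : Finset (Finset α)} {T : Finset α} (h : conn p q ∅ T) : T = ∅ := by
  rcases Relation.ReflTransGen.cases_head h with h' | ⟨c, hc, _⟩
  · exact h'.symm
  · exact absurd hc.2 (by simp)

lemma clsOf_empty {p q : Finset (Finset α)} : clsOf p q (∅ : Finset α) = ∅ := by
  refine Finset.eq_empty_of_forall_notMem fun x hx => ?_
  obtain ⟨T, _, hconn, hxT⟩ := mem_clsOf.mp hx
  rw [conn_empty hconn] at hxT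
  simp at hxT


/-- Key combinatorial fact: conn-classes with equal unions coincide. -/
lemma conn_of_clsOf_eq {p q : Finset (Finset α)} {S T : Finset α}
    (hS : S ∈ p ∪ q) (hT : T ∈ p ∪ q) (h : clsOf p q S = clsOf p q T) :
    conn p q S T := by
  by_contra hc
  have hnl : ∀ Y Y', conn p q S Y → conn p q T Y' → ¬ linkRel p q Y Y' := by
    intro Y Y' hY hY' hl
    exact hc (hY.trans ((Relation.ReflTransGen.single hl).trans (conn_symm hY')))
  have claim : ∀ Y Y', conn p q S Y → conn p q T Y' → (Y ∩ Y').Nonempty →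
      (Y ∈ p ∧ Y ∉ q ∧ Y' ∈ p ∧ Y' ∉ q) ∨ (Y ∈ q ∧ Y ∉ p ∧ Y' ∈ q ∧ Y' ∉ p) := by
    intro Y Y' hY hY' hint
    have hY'm : Y' ∈ p ∪ q := conn_mem hT hY'
    have h1 : ¬ (Y ∈ p ∧ Y' ∈ q) := fun hh => hnl Y Y' hY hY' ⟨Or.inl hh, hint⟩
    have h2 : ¬ (Y ∈ q ∧ Y' ∈ p) := fun hh => hnl Y Y' hY hY' ⟨Or.inr hh, hint⟩
    by_cases hYp : Y ∈ p
    · have hY'q : Y' ∉ q := fun hh => h1 ⟨hYp, hh⟩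
      have hY'p : Y' ∈ p := by
        rcases Finset.mem_union.mp hY'm with h' | h'
        · exact h'
        · exact absurd h' hY'q
      have hYq : Y ∉ q := fun hh => h2 ⟨hh, hY'p⟩
      exact Or.inl ⟨hYp, hYq, hY'p, hY'q⟩
    · have hYq : Y ∈ q := by
        rcases Finset.mem_union.mp (conn_mem hS hY) with h' | h'
        · exact absurd h' hYp
        · exact h'
      have hY'p : Y' ∉ p := fun hh => h2 ⟨hYq, hh⟩
      have hY'q : Y' ∈ q := by
        rcases Finset.mem_union.mp hY'm with h' | h'
        · exact absurd h' hY'p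
        · exact h'
      exact Or.inr ⟨hYq, hYp, hY'q, hY'p⟩
  -- no internal links in the class of S
  have hintS : ∀ Y1 Y2, conn p q S Y1 → conn p q S Y2 → ¬ linkRel p q Y1 Y2 := by
    intro Y1 Y2 h1 h2 hl
    obtain ⟨x, hx⟩ := hl.2
    have hx1 : x ∈ Y1 := (Finset.mem_inter.mp hx).1
    have hx2 : x ∈ Y2 := (Finset.mem_inter.mp hx).2
    have hxcls : x ∈ clsOf p q S := mem_clsOf.mpr ⟨Y1, conn_mem hS h1, h1, hx1⟩
    rw [h] at hxcls
    obtain ⟨B, hBm, hBconn, hxB⟩ := mem_clsOf.mp hxcls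
    rcases hl.1 with ⟨ha, hb⟩ | ⟨ha, hb⟩
    · rcases claim Y1 B h1 hBconn ⟨x, Finset.mem_inter.mpr ⟨hx1, hxB⟩⟩ with h' | h'
      · rcases claim Y2 B h2 hBconn ⟨x, Finset.mem_inter.mpr ⟨hx2, hxB⟩⟩ with h'' | h''
        · exact h''.2.1 hb
        · exact h''.2.2.2 h'.2.2.1
      · exact h'.2.1 ha
    · rcases claim Y1 B h1 hBconn ⟨x, Finset.mem_inter.mpr ⟨hx1, hxB⟩⟩ with h' | h'
      · exact h'.2.1 ha
      · rcases claim Y2 B h2 hBconn ⟨x, Finset.mem_inter.mpr ⟨hx2, hxB⟩⟩ with h'' | h''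
        · exact h''.2.2.2 h'.2.2.1
        · exact h''.2.1 hb
  -- no internal links in the class of T
  have hintT : ∀ Y1 Y2, conn p q T Y1 → conn p q T Y2 → ¬ linkRel p q Y1 Y2 := by
    intro Y1 Y2 h1 h2 hl
    obtain ⟨x, hx⟩ := hl.2
    have hx1 : x ∈ Y1 := (Finset.mem_inter.mp hx).1
    have hx2 : x ∈ Y2 := (Finset.mem_inter.mp hx).2
    have hxcls : x ∈ clsOf p q T := mem_clsOf.mpr ⟨Y1, conn_mem hT h1, h1, hx1⟩
    rw [← h] at hxcls
    obtain ⟨B, hBm, hBconn, hxB⟩ := mem_clsOf.mp hxcls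
    rcases hl.1 with ⟨ha, hb⟩ | ⟨ha, hb⟩
    · rcases claim B Y1 hBconn h1 ⟨x, Finset.mem_inter.mpr ⟨hxB, hx1⟩⟩ with h' | h'
      · rcases claim B Y2 hBconn h2 ⟨x, Finset.mem_inter.mpr ⟨hxB, hx2⟩⟩ with h'' | h''
        · exact h''.2.2.2 hb
        · exact h''.2.1 h'.1
      · exact h'.2.2.2 ha
    · rcases claim B Y1 hBconn h1 ⟨x, Finset.mem_inter.mpr ⟨hxB, hx1⟩⟩ with h' | h'
      · exact h'.2.2.2 ha
      · rcases claim B Y2 hBconn h2 ⟨x, Finset.mem_inter.mpr ⟨hxB, hx2⟩⟩ with h'' | h''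
        · exact h''.2.1 h'.1
        · exact h''.2.2.2 hb
  have htriv : ∀ (W : Finset (Finset α)) (W0 : Finset α), W0 ∈ p ∪ q →
      (∀ Y1 Y2, conn p q W0 Y1 → conn p q W0 Y2 → ¬ linkRel p q Y1 Y2) →
      clsOf p q W0 = W0 := by
    intro W W0 hW0 hint
    apply Finset.Subset.antisymm
    · intro x hx
      obtain ⟨Y, hYm, hYc, hxY⟩ := mem_clsOf.mp hx
      have hYS : Y = W0 := by
        rcases Relation.ReflTransGen.cases_head hYc with he | ⟨c, hlc, _⟩
        · exact he.symm
        · exact absurd hlc (hint W0 c Relation.ReflTransGen.refl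
            (Relation.ReflTransGen.single hlc))
      rwa [hYS] at hxY
    · exact subset_clsOf hW0
  have hS' : clsOf p q S = S := htriv p S hS hintS
  have hT' : clsOf p q T = T := htriv p T hT hintT
  have : S = T := by rw [← hS', h, hT']
  exact hc (this ▸ Relation.ReflTransGen.refl)

lemma consistent_iff {p q : Finset (Finset α)} :
    consistent p q ↔ (p ∪ q).Nonempty ∧ ∀ S ∈ p ∪ q, ∀ T ∈ p ∪ q, conn p q S T := by
  have hpj : pjoin p q = (p ∪ q).image (clsOf p q) := rfl
  constructor
  · intro h
    obtain ⟨a, ha⟩ := Finset.card_eq_one.mp h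
    have hne : (p ∪ q).Nonempty := by
      rw [← Finset.image_nonempty (f := clsOf p q), ← hpj, ha]
      exact ⟨a, Finset.mem_singleton_self a⟩
    refine ⟨hne, fun S hS T hT => ?_⟩
    apply conn_of_clsOf_eq hS hT
    have h1 : clsOf p q S ∈ pjoin p q := by rw [hpj]; exact Finset.mem_image_of_mem _ hS
    have h2 : clsOf p q T ∈ pjoin p q := by rw [hpj]; exact Finset.mem_image_of_mem _ hT
    rw [ha, Finset.mem_singleton] at h1 h2
    rw [h1, h2]
  · rintro ⟨⟨S₀, hS₀⟩, hall⟩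
    refine Finset.card_eq_one.mpr ⟨clsOf p q S₀, ?_⟩
    rw [hpj]
    apply Finset.Subset.antisymm
    · intro K hK
      obtain ⟨B, hB, rfl⟩ := Finset.mem_image.mp hK
      rw [Finset.mem_singleton]
      exact clsOf_eq_of_conn (conn_symm (hall S₀ hS₀ B hB))
    · rw [Finset.singleton_subset_iff]
      exact Finset.mem_image_of_mem _ hS₀


/-- Replace `Zq` by `Zpq`. -/
def lzq (Zq Zpq T : Finset α) : Finset α := if T = Zq then Zpq else T

/-- Images of sets of `(p ⊕ q) ∪ r` inside `p ∪ (q ⋈ r)`. -/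
def AssocUp (Zp Zq Zpq : Finset α) (p q r : Finset (Finset α)) (X X' : Finset α) : Prop :=
  (X ∈ p ∧ X' = X) ∨ (X ∈ q ∪ r ∧ X' = clsOf q r X) ∨
    (X = Zpq ∧ (X' = Zp ∨ X' = clsOf q r Zq))

/-- Images of sets of `p ∪ (q ⋈ r)` inside `(p ⊕ q) ∪ r`. -/
def DownIm (Zp Zq Zpq : Finset α) (p q r : Finset (Finset α)) (X X' : Finset α) : Prop :=
  (X = Zp ∧ X' = Zpq) ∨ (X ∈ p ∧ X ≠ Zp ∧ X' = X) ∨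
    (∃ B, B ∈ q ∪ r ∧ X = clsOf q r B ∧ ∃ T, T ∈ q ∪ r ∧ conn q r B T ∧ X' = lzq Zq Zpq T)


/-- For label-disjoint patterns `p, q`: `p ⊕ q ∼ r` iff `p ∼ q ⋈ r`. -/
theorem disjoint_union_consistent_iff_join (z : α) (U : Finset α)
    (p q : Finset (Finset α)) (hp : IsPattern z U p) (hq : IsPattern z U q)
    (Zp Zq : Finset α) (hZp : Zp ∈ p) (hzp : z ∈ Zp) (hZq : Zq ∈ q) (hzq : z ∈ Zq)
    (hdisj : lbs z p ∩ lbs z q = ∅) :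
    ∀ r : Finset (Finset α), IsPattern z U r →
      (consistent (insert (Zp ∪ Zq) ((p.erase Zp) ∪ (q.erase Zq))) r ↔
        consistent p (pjoin q r)) := by
  intro r _hr
  -- basic pattern facts
  have hupz : ∀ S ∈ p, z ∈ S → S = Zp := by
    obtain ⟨W, -, hu⟩ := hp.2
    intro S hS h
    rw [hu S ⟨hS, h⟩, hu Zp ⟨hZp, hzp⟩]
  have huqz : ∀ S ∈ q, z ∈ S → S = Zq := by
    obtain ⟨W, -, hu⟩ := hq.2
    intro S hS h
    rw [hu S ⟨hS, h⟩, hu Zq ⟨hZq, hzq⟩]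
  have hlbsp : ∀ {S x}, S ∈ p → x ∈ S → x ≠ z → x ∈ lbs z p := by
    intro S x hS hx hxz
    exact Finset.mem_erase.mpr ⟨hxz, Finset.mem_sup.mpr ⟨S, hS, hx⟩⟩
  have hlbsq : ∀ {S x}, S ∈ q → x ∈ S → x ≠ z → x ∈ lbs z q := by
    intro S x hS hx hxz
    exact Finset.mem_erase.mpr ⟨hxz, Finset.mem_sup.mpr ⟨S, hS, hx⟩⟩
  have hdisj' : ∀ {x}, x ∈ lbs z p → x ∈ lbs z q → False := by
    intro x hx hy
    exact Finset.notMem_empty x (hdisj ▸ Finset.mem_inter.mpr ⟨hx, hy⟩)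
  have hpq' : ∀ {S T x}, S ∈ p → T ∈ q → x ∈ S → x ∈ T → S = Zp ∧ T = Zq ∧ x = z := by
    intro S T x hS hT hxS hxT
    by_cases hxz : x = z
    · subst hxz
      exact ⟨hupz S hS hxS, huqz T hT hxT, rfl⟩
    · exact absurd (hlbsq hT hxT hxz) (fun h => hdisj' (hlbsp hS hxS hxz) h)
  set Zpq : Finset α := Zp ∪ Zq with hZpqdef
  set A : Finset (Finset α) := insert Zpq (p.erase Zp ∪ q.erase Zq) with hAdef
  set J : Finset (Finset α) := pjoin q r with hJdef
  have hz_pq : z ∈ Zpq := Finset.mem_union_left _ hzp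
  have hZpqA : Zpq ∈ A := Finset.mem_insert_self _ _
  have hmemPA : ∀ {X}, X ∈ p → X ≠ Zp → X ∈ A := by
    intro X hX hne
    exact Finset.mem_insert_of_mem (Finset.mem_union_left _ (Finset.mem_erase.mpr ⟨hne, hX⟩))
  have hmemQA : ∀ {X}, X ∈ q → X ≠ Zq → X ∈ A := by
    intro X hX hne
    exact Finset.mem_insert_of_mem (Finset.mem_union_right _ (Finset.mem_erase.mpr ⟨hne, hX⟩))
  have hpjqr : pjoin q r = (q ∪ r).image (clsOf q r) := rfl
  have hJmem : ∀ {B}, B ∈ q ∪ r → clsOf q r B ∈ J := by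
    intro B hB
    rw [hJdef, hpjqr]
    exact Finset.mem_image_of_mem _ hB
  have hJrep : ∀ {K}, K ∈ J → ∃ B, B ∈ q ∪ r ∧ clsOf q r B = K := by
    intro K hK
    rw [hJdef, hpjqr] at hK
    obtain ⟨B, hB, hBk⟩ := Finset.mem_image.mp hK
    exact ⟨B, hB, hBk⟩
  have hZqqr : Zq ∈ q ∪ r := Finset.mem_union_left _ hZq
  have hZqcls : z ∈ clsOf q r Zq := subset_clsOf hZqqr hzq
  have hlinkZp : linkRel p J Zp (clsOf q r Zq) :=
    ⟨Or.inl ⟨hZp, hJmem hZqqr⟩, ⟨z, Finset.mem_inter.mpr ⟨hzp, hZqcls⟩⟩⟩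
  have hconnZpClsZq : conn p J Zp (clsOf q r Zq) := Relation.ReflTransGen.single hlinkZp
  -- lifting (q,r)-connectivity to (A,r)-connectivity
  have hstepQR : ∀ U V, U ∈ q → V ∈ r → (U ∩ V).Nonempty →
      conn A r (lzq Zq Zpq U) (lzq Zq Zpq V) := by
    intro U V hUq hVr hUV
    obtain ⟨x, hx⟩ := hUV
    have hxU : x ∈ U := (Finset.mem_inter.mp hx).1
    have hxV : x ∈ V := (Finset.mem_inter.mp hx).2
    by_cases hU : U = Zq
    · rw [lzq, if_pos hU]
      by_cases hV : V = Zq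
      · rw [lzq, if_pos hV]
        exact Relation.ReflTransGen.refl
      · rw [lzq, if_neg hV]
        exact Relation.ReflTransGen.single ⟨Or.inl ⟨hZpqA, hVr⟩,
          ⟨x, Finset.mem_inter.mpr ⟨Finset.mem_union_right _ (hU ▸ hxU), hxV⟩⟩⟩
    · rw [lzq, if_neg hU]
      have hUA : U ∈ A := hmemQA hUq hU
      by_cases hV : V = Zq
      · rw [lzq, if_pos hV]
        have l1 : linkRel A r U V := ⟨Or.inl ⟨hUA, hVr⟩, ⟨x, hx⟩⟩
        have l2 : linkRel A r V Zpq :=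
          ⟨Or.inr ⟨hVr, hZpqA⟩, ⟨z, Finset.mem_inter.mpr ⟨hV ▸ hzq, hz_pq⟩⟩⟩
        exact (Relation.ReflTransGen.single l1).tail l2
      · rw [lzq, if_neg hV]
        exact Relation.ReflTransGen.single ⟨Or.inl ⟨hUA, hVr⟩, ⟨x, hx⟩⟩
  have hLIFT : ∀ U V, conn q r U V → conn A r (lzq Zq Zpq U) (lzq Zq Zpq V) := by
    intro U V h
    induction h with
    | refl => exact Relation.ReflTransGen.refl
    | tail _ hstep ih =>
      refine ih.trans ?_
      rcases hstep.1 with ⟨h1, h2⟩ | ⟨h1, h2⟩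
      · exact hstepQR _ _ h1 h2 hstep.2
      · have h3 := hstep.2
        rw [Finset.inter_comm] at h3
        exact conn_symm (hstepQR _ _ h2 h1 h3)
  -- up-direction helpers
  have hXclsX : ∀ X, X ∈ p → X ∈ q ∪ r → conn p J X (clsOf q r X) := by
    intro X hXp hXqr
    by_cases hX0 : X = (∅ : Finset α)
    · rw [hX0, clsOf_empty]
      exact Relation.ReflTransGen.refl
    · obtain ⟨x, hx⟩ := Finset.nonempty_iff_ne_empty.mpr hX0
      exact Relation.ReflTransGen.single ⟨Or.inl ⟨hXp, hJmem hXqr⟩,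
        ⟨x, Finset.mem_inter.mpr ⟨hx, subset_clsOf hXqr hx⟩⟩⟩
  have hclsZpq : Zpq ∈ q ∪ r → conn p J Zp (clsOf q r Zpq) := by
    intro hXqr
    exact Relation.ReflTransGen.single ⟨Or.inl ⟨hZp, hJmem hXqr⟩,
      ⟨z, Finset.mem_inter.mpr ⟨hzp, subset_clsOf hXqr hz_pq⟩⟩⟩
  have hclsZpqZq : Zpq ∈ q ∪ r → clsOf q r Zpq = clsOf q r Zq := by
    intro h
    rcases Finset.mem_union.mp h with hq' | hr'
    · rw [huqz Zpq hq' hz_pq]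
    · exact (clsOf_eq_of_conn (Relation.ReflTransGen.single
        ⟨Or.inl ⟨hZq, hr'⟩, ⟨z, Finset.mem_inter.mpr ⟨hzq, hz_pq⟩⟩⟩)).symm
  have hSelfUp : ∀ X X₁ X₂, AssocUp Zp Zq Zpq p q r X X₁ → AssocUp Zp Zq Zpq p q r X X₂ →
      conn p J X₁ X₂ := by
    intro X X₁ X₂ h1 h2
    rcases h1 with ⟨hm1, he1⟩ | ⟨hm1, he1⟩ | ⟨hm1, he1⟩ <;>
      rcases h2 with ⟨hm2, he2⟩ | ⟨hm2, he2⟩ | ⟨hm2, he2⟩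
    · rw [he1, he2]
      exact Relation.ReflTransGen.refl
    · rw [he1, he2]
      exact hXclsX X hm1 hm2
    · have hXZp : X = Zp := hupz X hm1 (hm2 ▸ hz_pq)
      rw [he1, hXZp]
      rcases he2 with rfl | rfl
      · exact Relation.ReflTransGen.refl
      · exact hconnZpClsZq
    · rw [he1, he2]
      exact conn_symm (hXclsX X hm2 hm1)
    · rw [he1, he2]
      exact Relation.ReflTransGen.refl
    · rw [he1, hm2]
      rcases he2 with rfl | rfl
      · exact conn_symm (hclsZpq (hm2 ▸ hm1))
      · rw [hclsZpqZq (hm2 ▸ hm1)]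
        exact Relation.ReflTransGen.refl
    · have hXZp : X = Zp := hupz X hm2 (hm1 ▸ hz_pq)
      rw [he2, hXZp]
      rcases he1 with rfl | rfl
      · exact Relation.ReflTransGen.refl
      · exact conn_symm hconnZpClsZq
    · rw [he2, hm1]
      rcases he1 with rfl | rfl
      · exact hclsZpq (hm1 ▸ hm2)
      · rw [hclsZpqZq (hm1 ▸ hm2)]
        exact Relation.ReflTransGen.refl
    · rcases he1 with rfl | rfl <;> rcases he2 with rfl | rfl
      · exact Relation.ReflTransGen.refl
      · exact hconnZpClsZq
      · exact conn_symm hconnZpClsZq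
      · exact Relation.ReflTransGen.refl
  have hStepUp1 : ∀ X Y, X ∈ A → Y ∈ r → (X ∩ Y).Nonempty →
      ∃ X₀ Y₀, AssocUp Zp Zq Zpq p q r X X₀ ∧ AssocUp Zp Zq Zpq p q r Y Y₀ ∧
        conn p J X₀ Y₀ := by
    intro X Y hXA hYr hint
    obtain ⟨x, hx⟩ := hint
    have hxX : x ∈ X := (Finset.mem_inter.mp hx).1
    have hxY : x ∈ Y := (Finset.mem_inter.mp hx).2
    have hYqr : Y ∈ q ∪ r := Finset.mem_union_right _ hYr
    have haY : AssocUp Zp Zq Zpq p q r Y (clsOf q r Y) := Or.inr (Or.inl ⟨hYqr, rfl⟩)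
    rcases Finset.mem_insert.mp hXA with hXZ | hX'
    · have hxZpq : x ∈ Zp ∪ Zq := hZpqdef ▸ (hXZ ▸ hxX)
      rcases Finset.mem_union.mp hxZpq with hxZp | hxZq
      · refine ⟨Zp, clsOf q r Y, Or.inr (Or.inr ⟨hXZ, Or.inl rfl⟩), haY, ?_⟩
        exact Relation.ReflTransGen.single ⟨Or.inl ⟨hZp, hJmem hYqr⟩,
          ⟨x, Finset.mem_inter.mpr ⟨hxZp, subset_clsOf hYqr hxY⟩⟩⟩
      · have hcls : clsOf q r Zq = clsOf q r Y := clsOf_eq_of_conn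
          (Relation.ReflTransGen.single ⟨Or.inl ⟨hZq, hYr⟩,
            ⟨x, Finset.mem_inter.mpr ⟨hxZq, hxY⟩⟩⟩)
        exact ⟨clsOf q r Zq, clsOf q r Y, Or.inr (Or.inr ⟨hXZ, Or.inr rfl⟩), haY,
          hcls ▸ Relation.ReflTransGen.refl⟩
    · rcases Finset.mem_union.mp hX' with hXP | hXQ
      · obtain ⟨hne, hXp⟩ := Finset.mem_erase.mp hXP
        refine ⟨X, clsOf q r Y, Or.inl ⟨hXp, rfl⟩, haY, ?_⟩
        exact Relation.ReflTransGen.single ⟨Or.inl ⟨hXp, hJmem hYqr⟩,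
          ⟨x, Finset.mem_inter.mpr ⟨hxX, subset_clsOf hYqr hxY⟩⟩⟩
      · obtain ⟨hne, hXq⟩ := Finset.mem_erase.mp hXQ
        have hXqr : X ∈ q ∪ r := Finset.mem_union_left _ hXq
        have hcls : clsOf q r X = clsOf q r Y := clsOf_eq_of_conn
          (Relation.ReflTransGen.single ⟨Or.inl ⟨hXq, hYr⟩, ⟨x, hx⟩⟩)
        exact ⟨clsOf q r X, clsOf q r Y, Or.inr (Or.inl ⟨hXqr, rfl⟩), haY,
          hcls ▸ Relation.ReflTransGen.refl⟩
  have hStepUp : ∀ X Y, linkRel A r X Y → ∀ X' Y', AssocUp Zp Zq Zpq p q r X X' →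
      AssocUp Zp Zq Zpq p q r Y Y' → conn p J X' Y' := by
    intro X Y hl X' Y' haX haY
    rcases hl.1 with ⟨h1, h2⟩ | ⟨h1, h2⟩
    · obtain ⟨X₀, Y₀, a₀, b₀, hc⟩ := hStepUp1 X Y h1 h2 hl.2
      exact ((hSelfUp X X' X₀ haX a₀).trans hc).trans (hSelfUp Y Y₀ Y' b₀ haY)
    · have h3 := hl.2
      rw [Finset.inter_comm] at h3
      obtain ⟨Y₀, X₀, b₀, a₀, hc⟩ := hStepUp1 Y X h2 h1 h3
      exact ((hSelfUp X X' X₀ haX a₀).trans (conn_symm hc)).trans (hSelfUp Y Y₀ Y' b₀ haY)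
  have himgUp : ∀ Y, Y ∈ A ∨ Y ∈ r → ∃ Y₀, AssocUp Zp Zq Zpq p q r Y Y₀ := by
    intro Y hY
    rcases hY with hYA | hYr
    · rcases Finset.mem_insert.mp hYA with hYZ | hY'
      · exact ⟨Zp, Or.inr (Or.inr ⟨hYZ, Or.inl rfl⟩)⟩
      · rcases Finset.mem_union.mp hY' with hYP | hYQ
        · exact ⟨Y, Or.inl ⟨(Finset.mem_erase.mp hYP).2, rfl⟩⟩
        · exact ⟨clsOf q r Y, Or.inr (Or.inl
            ⟨Finset.mem_union_left _ (Finset.mem_erase.mp hYQ).2, rfl⟩)⟩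
    · exact ⟨clsOf q r Y, Or.inr (Or.inl ⟨Finset.mem_union_right _ hYr, rfl⟩)⟩
  have hPhiUp : ∀ X Y, conn A r X Y → ∀ X' Y', AssocUp Zp Zq Zpq p q r X X' →
      AssocUp Zp Zq Zpq p q r Y Y' → conn p J X' Y' := by
    intro X Y h
    induction h with
    | refl => exact fun X' Y' a b => hSelfUp X X' Y' a b
    | tail _ hstep ih =>
      intro X' Z' aX aZ
      rename_i b c _
      have hbm : b ∈ A ∨ b ∈ r := by
        rcases hstep.1 with ⟨hb, _⟩ | ⟨hb, _⟩
        · exact Or.inl hb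
        · exact Or.inr hb
      obtain ⟨Y₀, hY₀⟩ := himgUp b hbm
      exact (ih X' Y₀ aX hY₀).trans (hStepUp b c hstep Y₀ Z' hY₀ aZ)
  -- down-direction helpers
  have hZqne : (Zq : Finset α) ≠ ∅ := fun h => by rw [h] at hzq; simp at hzq
  have h13 : ∀ B, B ∈ q ∪ r → Zp = clsOf q r B → ∀ T, T ∈ q ∪ r → conn q r B T →
      conn A r Zpq (lzq Zq Zpq T) := by
    intro B hB hcls T hT hcT
    have hTsub : T ⊆ Zp := by
      have h1 : clsOf q r B = clsOf q r T := clsOf_eq_of_conn hcT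
      have h2 : T ⊆ clsOf q r T := subset_clsOf hT
      rw [← h1, ← hcls] at h2
      exact h2
    by_cases hTZq : T = Zq
    · rw [lzq, if_pos hTZq]
      exact Relation.ReflTransGen.refl
    · rw [lzq, if_neg hTZq]
      have hTne : T ≠ ∅ := by
        intro h0
        have h1 : Zp = (∅ : Finset α) := by
          rw [hcls, clsOf_eq_of_conn hcT, h0, clsOf_empty]
        rw [h1] at hzp
        simp at hzp
      obtain ⟨x, hxT⟩ := Finset.nonempty_iff_ne_empty.mpr hTne
      have hxZp : x ∈ Zp := hTsub hxT
      rcases Finset.mem_union.mp hT with hTq | hTr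
      · exfalso
        have hxz : x ≠ z := fun he => hTZq (huqz T hTq (he ▸ hxT))
        exact hdisj' (hlbsp hZp hxZp hxz) (hlbsq hTq hxT hxz)
      · exact Relation.ReflTransGen.single ⟨Or.inl ⟨hZpqA, hTr⟩,
          ⟨x, Finset.mem_inter.mpr ⟨Finset.mem_union_left _ hxZp, hxT⟩⟩⟩
  have h23 : ∀ X, X ∈ p → X ≠ Zp → ∀ B, B ∈ q ∪ r → X = clsOf q r B →
      ∀ T, T ∈ q ∪ r → conn q r B T → conn A r X (lzq Zq Zpq T) := by
    intro X hXp hXne B hB hcls T hT hcT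
    have hTsub : T ⊆ X := by
      have h1 : clsOf q r B = clsOf q r T := clsOf_eq_of_conn hcT
      have h2 : T ⊆ clsOf q r T := subset_clsOf hT
      rw [← h1, ← hcls] at h2
      exact h2
    by_cases hT0 : T = (∅ : Finset α)
    · have hXe : X = (∅ : Finset α) := by
        rw [hcls, clsOf_eq_of_conn hcT, hT0, clsOf_empty]
      have hl0 : lzq Zq Zpq T = T := by
        rw [lzq, if_neg (hT0 ▸ fun h => hZqne h.symm)]
      rw [hl0, hT0, hXe]
      exact Relation.ReflTransGen.refl
    · obtain ⟨x, hxT⟩ := Finset.nonempty_iff_ne_empty.mpr hT0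
      have hxX : x ∈ X := hTsub hxT
      have hTZq : T ≠ Zq := fun he => hXne (hupz X hXp (hTsub (he ▸ hzq)))
      rw [lzq, if_neg hTZq]
      rcases Finset.mem_union.mp hT with hTq | hTr
      · exfalso
        have hxz : x ≠ z := fun he => hTZq (huqz T hTq (he ▸ hxT))
        exact hdisj' (hlbsp hXp hxX hxz) (hlbsq hTq hxT hxz)
      · exact Relation.ReflTransGen.single ⟨Or.inl ⟨hmemPA hXp hXne, hTr⟩,
          ⟨x, Finset.mem_inter.mpr ⟨hxX, hxT⟩⟩⟩
  have hSelfDown : ∀ X X₁ X₂, DownIm Zp Zq Zpq p q r X X₁ → DownIm Zp Zq Zpq p q r X X₂ →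
      conn A r X₁ X₂ := by
    intro X X₁ X₂ h1 h2
    rcases h1 with ⟨hm1, he1⟩ | ⟨hm1, hn1, he1⟩ | ⟨B₁, hB₁, hc₁, T₁, hT₁, hcT₁, he1⟩ <;>
      rcases h2 with ⟨hm2, he2⟩ | ⟨hm2, hn2, he2⟩ | ⟨B₂, hB₂, hc₂, T₂, hT₂, hcT₂, he2⟩
    · rw [he1, he2]
      exact Relation.ReflTransGen.refl
    · exact absurd hm1 hn2
    · rw [he1, he2]
      exact h13 B₂ hB₂ (hm1 ▸ hc₂) T₂ hT₂ hcT₂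
    · exact absurd hm2 hn1
    · rw [he1, he2]
      exact Relation.ReflTransGen.refl
    · rw [he1, he2]
      exact h23 X hm1 hn1 B₂ hB₂ hc₂ T₂ hT₂ hcT₂
    · rw [he1, he2]
      exact conn_symm (h13 B₁ hB₁ (hm2 ▸ hc₁) T₁ hT₁ hcT₁)
    · rw [he1, he2]
      exact conn_symm (h23 X hm2 hn2 B₁ hB₁ hc₁ T₁ hT₁ hcT₁)
    · rw [he1, he2]
      have hBB : conn q r B₁ B₂ := conn_of_clsOf_eq hB₁ hB₂ (hc₁.symm.trans hc₂)
      exact hLIFT T₁ T₂ ((conn_symm hcT₁).trans (hBB.trans hcT₂))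
  have hStepDown1 : ∀ Y Z, Y ∈ p → Z ∈ J → (Y ∩ Z).Nonempty →
      ∃ Y₀ Z₀, DownIm Zp Zq Zpq p q r Y Y₀ ∧ DownIm Zp Zq Zpq p q r Z Z₀ ∧
        conn A r Y₀ Z₀ := by
    intro Y Z hYp hZJ hint
    obtain ⟨x, hx⟩ := hint
    have hxY : x ∈ Y := (Finset.mem_inter.mp hx).1
    have hxZ : x ∈ Z := (Finset.mem_inter.mp hx).2
    obtain ⟨B, hB, hBcls⟩ := hJrep hZJ
    have hxB : x ∈ clsOf q r B := hBcls ▸ hxZ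
    obtain ⟨T, hT, hcT, hxT⟩ := mem_clsOf.mp hxB
    have hdZ : DownIm Zp Zq Zpq p q r Z (lzq Zq Zpq T) :=
      Or.inr (Or.inr ⟨B, hB, hBcls.symm, T, hT, hcT, rfl⟩)
    by_cases hTZq : T = Zq
    · have hxz : x = z := by
        by_contra hxz
        exact hdisj' (hlbsp hYp hxY hxz) (hlbsq hZq (hTZq ▸ hxT) hxz)
      have hYZp : Y = Zp := hupz Y hYp (hxz ▸ hxY)
      refine ⟨Zpq, lzq Zq Zpq T, Or.inl ⟨hYZp, rfl⟩, hdZ, ?_⟩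
      rw [lzq, if_pos hTZq]
      exact Relation.ReflTransGen.refl
    · rcases Finset.mem_union.mp hT with hTq | hTr
      · exact absurd (hpq' hYp hTq hxY hxT).2.1 hTZq
      · by_cases hYZp : Y = Zp
        · refine ⟨Zpq, lzq Zq Zpq T, Or.inl ⟨hYZp, rfl⟩, hdZ, ?_⟩
          rw [lzq, if_neg hTZq]
          exact Relation.ReflTransGen.single ⟨Or.inl ⟨hZpqA, hTr⟩,
            ⟨x, Finset.mem_inter.mpr ⟨Finset.mem_union_left _ (hYZp ▸ hxY), hxT⟩⟩⟩
        · refine ⟨Y, lzq Zq Zpq T, Or.inr (Or.inl ⟨hYp, hYZp, rfl⟩), hdZ, ?_⟩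
          rw [lzq, if_neg hTZq]
          exact Relation.ReflTransGen.single ⟨Or.inl ⟨hmemPA hYp hYZp, hTr⟩,
            ⟨x, Finset.mem_inter.mpr ⟨hxY, hxT⟩⟩⟩
  have hStepDown : ∀ Y Z, linkRel p J Y Z → ∀ Y' Z', DownIm Zp Zq Zpq p q r Y Y' →
      DownIm Zp Zq Zpq p q r Z Z' → conn A r Y' Z' := by
    intro Y Z hl Y' Z' haY haZ
    rcases hl.1 with ⟨h1, h2⟩ | ⟨h1, h2⟩
    · obtain ⟨Y₀, Z₀, a₀, b₀, hc⟩ := hStepDown1 Y Z h1 h2 hl.2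
      exact ((hSelfDown Y Y' Y₀ haY a₀).trans hc).trans (hSelfDown Z Z₀ Z' b₀ haZ)
    · have h3 := hl.2
      rw [Finset.inter_comm] at h3
      obtain ⟨Z₀, Y₀, b₀, a₀, hc⟩ := hStepDown1 Z Y h2 h1 h3
      exact ((hSelfDown Y Y' Y₀ haY a₀).trans (conn_symm hc)).trans
        (hSelfDown Z Z₀ Z' b₀ haZ)
  have himgDown : ∀ Y, Y ∈ p ∨ Y ∈ J → ∃ Y₀, DownIm Zp Zq Zpq p q r Y Y₀ := by
    intro Y hY
    rcases hY with hYp | hYJ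
    · by_cases hYZp : Y = Zp
      · exact ⟨Zpq, Or.inl ⟨hYZp, rfl⟩⟩
      · exact ⟨Y, Or.inr (Or.inl ⟨hYp, hYZp, rfl⟩)⟩
    · obtain ⟨B, hB, hBcls⟩ := hJrep hYJ
      exact ⟨lzq Zq Zpq B, Or.inr (Or.inr ⟨B, hB, hBcls.symm, B, hB,
        Relation.ReflTransGen.refl, rfl⟩)⟩
  have hPhiDown : ∀ X Y, conn p J X Y → ∀ X' Y', DownIm Zp Zq Zpq p q r X X' →
      DownIm Zp Zq Zpq p q r Y Y' → conn A r X' Y' := by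
    intro X Y h
    induction h with
    | refl => exact fun X' Y' a b => hSelfDown X X' Y' a b
    | tail _ hstep ih =>
      intro X' Z' aX aZ
      rename_i b c _
      have hbm : b ∈ p ∨ b ∈ J := by
        rcases hstep.1 with ⟨hb, _⟩ | ⟨hb, _⟩
        · exact Or.inl hb
        · exact Or.inr hb
      obtain ⟨Y₀, hY₀⟩ := himgDown b hbm
      exact (ih X' Y₀ aX hY₀).trans (hStepDown b c hstep Y₀ Z' hY₀ aZ)
  -- final assembly
  rw [consistent_iff, consistent_iff]
  constructor
  · rintro ⟨-, HL⟩
    have hub : ∀ X ∈ p ∪ J, conn p J Zp X := by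
      intro X hX
      rcases Finset.mem_union.mp hX with hXp | hXJ
      · by_cases hXZp : X = Zp
        · rw [hXZp]
          exact Relation.ReflTransGen.refl
        · have h1 : conn A r Zpq X := HL Zpq (Finset.mem_union_left _ hZpqA) X
            (Finset.mem_union_left _ (hmemPA hXp hXZp))
          exact hPhiUp Zpq X h1 Zp X (Or.inr (Or.inr ⟨rfl, Or.inl rfl⟩))
            (Or.inl ⟨hXp, rfl⟩)
      · obtain ⟨B, hB, hBcls⟩ := hJrep hXJ
        by_cases hBZq : B = Zq
        · rw [← hBcls, hBZq]
          exact hconnZpClsZq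
        · have hBAr : B ∈ A ∪ r := by
            rcases Finset.mem_union.mp hB with hq' | hr'
            · exact Finset.mem_union_left _ (hmemQA hq' hBZq)
            · exact Finset.mem_union_right _ hr'
          have h1 : conn A r Zpq B := HL Zpq (Finset.mem_union_left _ hZpqA) B hBAr
          have h2 := hPhiUp Zpq B h1 Zp (clsOf q r B)
            (Or.inr (Or.inr ⟨rfl, Or.inl rfl⟩)) (Or.inr (Or.inl ⟨hB, rfl⟩))
          rwa [hBcls] at h2
    refine ⟨⟨Zp, Finset.mem_union_left _ hZp⟩, fun S hS T hT => ?_⟩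
    exact (conn_symm (hub S hS)).trans (hub T hT)
  · rintro ⟨-, HR⟩
    have hub : ∀ X ∈ A ∪ r, conn A r Zpq X := by
      intro X hX
      rcases Finset.mem_union.mp hX with hXA | hXr
      · rcases Finset.mem_insert.mp hXA with hXZ | hX'
        · rw [hXZ]
          exact Relation.ReflTransGen.refl
        · rcases Finset.mem_union.mp hX' with hXP | hXQ
          · obtain ⟨hne, hXp⟩ := Finset.mem_erase.mp hXP
            have h1 : conn p J Zp X := HR Zp (Finset.mem_union_left _ hZp) X
              (Finset.mem_union_left _ hXp)
            exact hPhiDown Zp X h1 Zpq X (Or.inl ⟨rfl, rfl⟩)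
              (Or.inr (Or.inl ⟨hXp, hne, rfl⟩))
          · obtain ⟨hne, hXq⟩ := Finset.mem_erase.mp hXQ
            have hXqr : X ∈ q ∪ r := Finset.mem_union_left _ hXq
            have h1 : conn p J Zp (clsOf q r X) := HR Zp (Finset.mem_union_left _ hZp)
              (clsOf q r X) (Finset.mem_union_right _ (hJmem hXqr))
            have hlz : X = lzq Zq Zpq X := by rw [lzq, if_neg hne]
            exact hPhiDown Zp (clsOf q r X) h1 Zpq X (Or.inl ⟨rfl, rfl⟩)
              (Or.inr (Or.inr ⟨X, hXqr, rfl, X, hXqr, Relation.ReflTransGen.refl, hlz⟩))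
      · by_cases hXZq : X = Zq
        · exact Relation.ReflTransGen.single ⟨Or.inl ⟨hZpqA, hXr⟩,
            ⟨z, Finset.mem_inter.mpr ⟨hz_pq, hXZq ▸ hzq⟩⟩⟩
        · have hXqr : X ∈ q ∪ r := Finset.mem_union_right _ hXr
          have h1 : conn p J Zp (clsOf q r X) := HR Zp (Finset.mem_union_left _ hZp)
            (clsOf q r X) (Finset.mem_union_right _ (hJmem hXqr))
          have hlz : X = lzq Zq Zpq X := by rw [lzq, if_neg hXZq]
          exact hPhiDown Zp (clsOf q r X) h1 Zpq X (Or.inl ⟨rfl, rfl⟩)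
            (Or.inr (Or.inr ⟨X, hXqr, rfl, X, hXqr, Relation.ReflTransGen.refl, hlz⟩))
    refine ⟨⟨Zpq, Finset.mem_union_left _ hZpqA⟩, fun S hS T hT => ?_⟩
    exact (conn_symm (hub S hS)).trans (hub T hT)

end PatternST
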